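/- Let G be a torsion-free nilpotent group with center C. Suppose G has an abelian subgroup H containing C such that for every x ∈ G there exists a positive integer r with x^r ∈ H (equivalently, x^r·C ∈ H/C). Then G is abelian. -/

import Mathlib

section Aux

variable {G : Type*} [Group G]

/-- If `z ∈ Z_{i+1}` then its image in `G ⧸ Z_i` is central. -/
lemma aux_central {i : ℕ} {z : G} (hz : z ∈ Subgroup.upperCentralSeries G (i + 1)) :
    ∀ w : G, (QuotientGroup.mk' (Subgroup.upperCentralSeries G i)) z
        * (QuotientGroup.mk' (Subgroup.upperCentralSeries G i)) w
      = (QuotientGroup.mk' (Subgroup.upperCentralSeries G i)) w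
        * (QuotientGroup.mk' (Subgroup.upperCentralSeries G i)) z := by
  intro w
  have h := (mem_upperCentralSeries_succ_iff).mp hz w
  set π := QuotientGroup.mk' (Subgroup.upperCentralSeries G i) with hπ
  have h1 : π (z * w * z⁻¹ * w⁻¹) = 1 := by
    rw [← MonoidHom.mem_ker, QuotientGroup.ker_mk'] ; exact h
  have := h1
  simp only [map_mul, map_inv] at this
  have h2 : π z * π w * (π z)⁻¹ * (π w)⁻¹ = 1 := this
  calc π z * π w = (π z * π w * (π z)⁻¹ * (π w)⁻¹) * (π w * π z) := by group
    _ = π w * π z := by rw [h2, one_mul]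

/-- Core computation: if `z ∈ Z_{i+1}` and `(x*z)^n * (x^n)⁻¹ ∈ Z_i` then `z^n ∈ Z_i`. -/
lemma aux_pow_mem {i n : ℕ} {x z : G} (hz : z ∈ Subgroup.upperCentralSeries G (i + 1))
    (h : (x * z) ^ n * (x ^ n)⁻¹ ∈ Subgroup.upperCentralSeries G i) :
    z ^ n ∈ Subgroup.upperCentralSeries G i := by
  set π := QuotientGroup.mk' (Subgroup.upperCentralSeries G i) with hπ
  have hc : Commute (π x) (π z) := (aux_central hz x).symm
  have h1 : π ((x * z) ^ n * (x ^ n)⁻¹) = 1 := by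
    rw [← MonoidHom.mem_ker, QuotientGroup.ker_mk'] ; exact h
  have h2 : (π x * π z) ^ n = π x ^ n * π z ^ n := hc.mul_pow n
  have h3 : π z ^ n = 1 := by
    have : π x ^ n * π z ^ n * (π x ^ n)⁻¹ = 1 := by
      simpa [map_mul, map_inv, map_pow, h2] using h1
    calc π z ^ n = (π x ^ n)⁻¹ * (π x ^ n * π z ^ n * (π x ^ n)⁻¹) * π x ^ n := by group
      _ = 1 := by rw [this]; group
  have h4 : π (z ^ n) = 1 := by simpa [map_pow] using h3
  rwa [← MonoidHom.mem_ker, QuotientGroup.ker_mk'] at h4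

/-- Single-step isolation: `x ∈ Z_{i+1}` and `x^n ∈ Z_i` imply `x ∈ Z_i`. -/
lemma aux_step (htf : ∀ g : G, g ≠ 1 → ¬IsOfFinOrder g) {n : ℕ} (hn : 0 < n) :
    ∀ i : ℕ, ∀ x : G, x ∈ Subgroup.upperCentralSeries G (i + 1) →
      x ^ n ∈ Subgroup.upperCentralSeries G i → x ∈ Subgroup.upperCentralSeries G i := by
  intro i
  induction i with
  | zero =>
    intro x _ hxn
    have h1 : x ^ n = 1 := by simpa [upperCentralSeries_zero, Subgroup.mem_bot] using hxn
    by_contra hx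
    have : x = 1 := by
      by_contra hx1
      exact htf x hx1 (isOfFinOrder_iff_pow_eq_one.mpr ⟨n, hn, h1⟩)
    exact hx (by simp [this])
  | succ i ih =>
    intro x hx1 hxn
    rw [mem_upperCentralSeries_succ_iff]
    intro g
    set z : G := x⁻¹ * g * x * g⁻¹ with hzdef
    -- z ∈ Z_{i+1}
    have hZnorm : (Subgroup.upperCentralSeries G (i + 1)).Normal := inferInstance
    have hz1 : z ∈ Subgroup.upperCentralSeries G (i + 1) := by
      have h := (mem_upperCentralSeries_succ_iff).mp hx1 g
      -- z = x⁻¹ * (x*g*x⁻¹*g⁻¹)⁻¹ * x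
      have hinv : (x * g * x⁻¹ * g⁻¹)⁻¹ ∈ Subgroup.upperCentralSeries G (i + 1) :=
        (Subgroup.upperCentralSeries G (i + 1)).inv_mem h
      have hconj := hZnorm.conj_mem _ hinv x⁻¹
      have : x⁻¹ * (x * g * x⁻¹ * g⁻¹)⁻¹ * x⁻¹⁻¹ = z := by
        rw [hzdef]; group
      rwa [this] at hconj
    -- (x*z)^n * (x^n)⁻¹ ∈ Z_i
    have hxz : x * z = g * x * g⁻¹ := by rw [hzdef]; group
    have hpow : (x * z) ^ n * (x ^ n)⁻¹ ∈ Subgroup.upperCentralSeries G i := by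
      have h := (mem_upperCentralSeries_succ_iff).mp hxn g
      have hinv : (x ^ n * g * (x ^ n)⁻¹ * g⁻¹)⁻¹ ∈ Subgroup.upperCentralSeries G i :=
        (Subgroup.upperCentralSeries G i).inv_mem h
      have heq : (x * z) ^ n * (x ^ n)⁻¹ = (x ^ n * g * (x ^ n)⁻¹ * g⁻¹)⁻¹ := by
        rw [hxz, conj_pow]; group
      rwa [heq]
    have hzn : z ^ n ∈ Subgroup.upperCentralSeries G i := aux_pow_mem hz1 hpow
    have hz : z ∈ Subgroup.upperCentralSeries G i := ih z hz1 hzn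
    -- goal : x * g * x⁻¹ * g⁻¹ ∈ Z_i ; it equals x * z⁻¹ * x⁻¹
    have hZnorm' : (Subgroup.upperCentralSeries G i).Normal := inferInstance
    have hconj := hZnorm'.conj_mem _ ((Subgroup.upperCentralSeries G i).inv_mem hz) x
    have : x * z⁻¹ * x⁻¹ = x * g * x⁻¹ * g⁻¹ := by rw [hzdef]; group
    rwa [this] at hconj

/-- Isolation of the upper central series terms. -/
lemma aux_iso (hnilp : Group.IsNilpotent G) (htf : ∀ g : G, g ≠ 1 → ¬IsOfFinOrder g)
    {n : ℕ} (hn : 0 < n) (i : ℕ) (x : G) (hx : x ^ n ∈ Subgroup.upperCentralSeries G i) :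
    x ∈ Subgroup.upperCentralSeries G i := by
  obtain ⟨c, hc⟩ := hnilp.nilpotent
  have key : ∀ d : ℕ, x ∈ Subgroup.upperCentralSeries G (i + d) → x ∈ Subgroup.upperCentralSeries G i := by
    intro d
    induction d with
    | zero => intro h; simpa using h
    | succ d ih =>
      intro h
      exact ih (aux_step htf hn (i + d) x h
        (upperCentralSeries_mono G (Nat.le_add_right i d) hx))
  rcases le_or_gt c i with hci | hci
  · exact upperCentralSeries_mono G hci (by rw [hc]; trivial)
  · exact key (c - i) (by
      have : i + (c - i) = c := by omega
      rw [this, hc]; trivial)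

/-- In a torsion-free nilpotent group, if `x^n` commutes with `y` (`n > 0`)
then `x` commutes with `y`. -/
lemma aux_commute (hnilp : Group.IsNilpotent G) (htf : ∀ g : G, g ≠ 1 → ¬IsOfFinOrder g)
    {n : ℕ} (hn : 0 < n) (x y : G) (h : x ^ n * y = y * x ^ n) : x * y = y * x := by
  set z : G := x⁻¹ * y * x * y⁻¹ with hzdef
  have hxz : x * z = y * x * y⁻¹ := by rw [hzdef]; group
  obtain ⟨c, hc⟩ := hnilp.nilpotent
  have hdesc : ∀ i : ℕ, z ∈ Subgroup.upperCentralSeries G i → z ∈ Subgroup.upperCentralSeries G 0 := by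
    intro i
    induction i with
    | zero => exact fun h => h
    | succ i ih =>
      intro hz1
      apply ih
      apply aux_iso hnilp htf hn
      apply aux_pow_mem hz1
      have heq : (x * z) ^ n * (x ^ n)⁻¹ = 1 := by
        rw [hxz, conj_pow]
        have : y * x ^ n * y⁻¹ = x ^ n := by
          rw [← h]; group
        rw [this]; group
      rw [heq]; exact (Subgroup.upperCentralSeries G i).one_mem
  have hz0 : z ∈ Subgroup.upperCentralSeries G 0 := hdesc c (by rw [hc]; trivial)
  have hz : z = 1 := by simpa [upperCentralSeries_zero, Subgroup.mem_bot] using hz0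
  have : x⁻¹ * y * x * y⁻¹ = 1 := hz
  have h5 : y * x = x * (x⁻¹ * y * x * y⁻¹) * y := by group
  rw [this, mul_one] at h5
  exact h5.symm

end Aux

/-- a torsion-free nilpotent group with an abelian subgroup H
containing the center such that every element has a positive power lying in H
is abelian. -/
theorem stmt_5 (G : Type*) [Group G] (hnilp : Group.IsNilpotent G)
    (htf : ∀ g : G, g ≠ 1 → ¬IsOfFinOrder g)
    (H : Subgroup G) (hCH : Subgroup.center G ≤ H)
    (hHab : ∀ a b : ↥H, a * b = b * a)
    (hroot : ∀ x : G, ∃ r : ℕ, 0 < r ∧ x ^ r ∈ H) :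
    ∀ a b : G, a * b = b * a := by
  intro a b
  obtain ⟨r, hr, har⟩ := hroot a
  obtain ⟨s, hs, hbs⟩ := hroot b
  have hcomm : a ^ r * b ^ s = b ^ s * a ^ r := by
    have := hHab ⟨a ^ r, har⟩ ⟨b ^ s, hbs⟩
    exact Subtype.ext_iff.mp this
  have h1 : a * b ^ s = b ^ s * a :=
    aux_commute hnilp htf hr a (b ^ s) hcomm
  have h2 : b * a = a * b :=
    aux_commute hnilp htf hs b a h1.symm
  exact h2.symm
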